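/- With A(t) = ∏_i (t − α_i) and scalars s_{ij} satisfying Σ_{i<j} s_{ij} A(t)/((t−α_i)(t−α_j)) ≡ 0, the coefficient of t^{2g−6} in R(t) = Σ_{i<j} s_{ij} A(t)^2/((t−α_i)^2(t−α_j)^2) equals −Σ_{i<j} (α_i² + α_j²) s_{ij}. -/

import Mathlib

open Polynomial

lemma coeff2_mul' {K : Type*} [CommRing K] (p q : K[X]) :
    (p*q).coeff 2 = p.coeff 0 * q.coeff 2 + p.coeff 1 * q.coeff 1 + p.coeff 2 * q.coeff 0 := by
  rw [coeff_mul, Finset.Nat.sum_antidiagonal_eq_sum_range_succ_mk]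
  simp [Finset.sum_range_succ]

lemma coeff1_mul' {K : Type*} [CommRing K] (p q : K[X]) :
    (p*q).coeff 1 = p.coeff 0 * q.coeff 1 + p.coeff 1 * q.coeff 0 := by
  rw [coeff_mul, Finset.Nat.sum_antidiagonal_eq_sum_range_succ_mk]
  simp [Finset.sum_range_succ]

lemma reflect_X_sub_C' {K : Type*} [CommRing K] (a : K) :
    Polynomial.reflect 1 (X - C a) = 1 - C a * X := by
  rw [sub_eq_add_neg, ← C_neg, Polynomial.reflect_add, Polynomial.reflect_C, pow_one,
    reflect_one_X, C_neg]
  ring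

lemma reflect_sum' {K : Type*} [CommRing K] {ι : Type*} (t : Finset ι) (f : ι → K[X]) (N : ℕ) :
    Polynomial.reflect N (∑ x ∈ t, f x) = ∑ x ∈ t, Polynomial.reflect N (f x) := by
  induction t using Finset.cons_induction with
  | empty => simp
  | cons a t ha ih => rw [Finset.sum_cons, Finset.sum_cons, Polynomial.reflect_add, ih]

lemma natDegree_prod_lin' {K : Type*} [CommRing K] [Nontrivial K] (S : Finset ℕ) (α : ℕ → K) :
    (∏ m ∈ S, (X - C (α m))).natDegree ≤ S.card := by
  refine le_trans (natDegree_prod_le _ _) ?_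
  apply le_of_eq
  simp [natDegree_X_sub_C]

lemma reflect_prod_lin' {K : Type*} [CommRing K] [Nontrivial K] (S : Finset ℕ) (α : ℕ → K) :
    Polynomial.reflect S.card (∏ m ∈ S, (X - C (α m))) = ∏ m ∈ S, (1 - C (α m) * X) := by
  induction S using Finset.induction with
  | empty => simp
  | insert _ _ ha ih =>
    rename_i a S
    rw [Finset.prod_insert ha, Finset.prod_insert ha, Finset.card_insert_of_notMem ha,
      add_comm, Polynomial.reflect_mul _ _ (natDegree_X_sub_C (α a)).le (natDegree_prod_lin' S α),
      reflect_X_sub_C', ih]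

lemma lin_coeff0 {K : Type*} [CommRing K] (a : K) : (1 - C a * X).coeff 0 = 1 := by simp
lemma lin_coeff1 {K : Type*} [CommRing K] (a : K) : (1 - C a * X).coeff 1 = -a := by simp [coeff_one]
lemma lin_coeff2 {K : Type*} [CommRing K] (a : K) : (1 - C a * X).coeff 2 = 0 := by
  rw [coeff_sub, coeff_C_mul, coeff_X, coeff_one]
  norm_num

lemma pair_coeff0 {K : Type*} [CommRing K] (a b : K) :
    ((1 - C a * X) * (1 - C b * X)).coeff 0 = 1 := by
  rw [mul_coeff_zero, lin_coeff0, lin_coeff0, mul_one]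

lemma pair_coeff1 {K : Type*} [CommRing K] (a b : K) :
    ((1 - C a * X) * (1 - C b * X)).coeff 1 = -(a + b) := by
  rw [coeff1_mul', lin_coeff0, lin_coeff0, lin_coeff1, lin_coeff1]
  ring

lemma pair_coeff2 {K : Type*} [CommRing K] (a b : K) :
    ((1 - C a * X) * (1 - C b * X)).coeff 2 = a * b := by
  rw [coeff2_mul', lin_coeff0, lin_coeff0, lin_coeff1, lin_coeff1, lin_coeff2, lin_coeff2]
  ring

/-- with `A(t) = ∏_i (t−α_i)` (the `α_i` distinct) and scalars `s_{ij}`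
satisfying `∑_{i<j} s_{ij} A(t)/((t−α_i)(t−α_j)) ≡ 0`, the coefficient of `t^{2g−6}` in
`R(t) = ∑_{i<j} s_{ij} A(t)²/((t−α_i)²(t−α_j)²)` equals `−∑_{i<j} (α_i² + α_j²) s_{ij}`. -/
theorem R_coeff_top {K : Type*} [Field K] (g : ℕ) (hg : 3 ≤ g)
    (α : ℕ → K) (hdist : ∀ i < g, ∀ j < g, α i = α j → i = j) (s : ℕ → ℕ → K)
    (hP : (∑ i ∈ Finset.range g, ∑ j ∈ Finset.Ico (i + 1) g,
        Polynomial.C (s i j) *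
          ∏ m ∈ Finset.range g \ {i, j}, (Polynomial.X - Polynomial.C (α m))) = 0) :
    (∑ i ∈ Finset.range g, ∑ j ∈ Finset.Ico (i + 1) g,
        Polynomial.C (s i j) *
          (∏ m ∈ Finset.range g \ {i, j},
            (Polynomial.X - Polynomial.C (α m))) ^ 2).coeff (2 * g - 6) =
      -∑ i ∈ Finset.range g, ∑ j ∈ Finset.Ico (i + 1) g,
          (α i ^ 2 + α j ^ 2) * s i j := by
  classical
  set B : ℕ → ℕ → K[X] := fun i j => ∏ m ∈ Finset.range g \ {i, j}, (X - C (α m)) with hB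
  set Q : ℕ → ℕ → K[X] := fun i j => ∏ m ∈ Finset.range g \ {i, j}, (1 - C (α m) * X) with hQdef
  -- membership facts
  have hmem : ∀ i ∈ Finset.range g, ∀ j ∈ Finset.Ico (i + 1) g,
      i < g ∧ j < g ∧ i ≠ j := by
    intro i hi j hj
    simp only [Finset.mem_range] at hi
    simp only [Finset.mem_Ico] at hj
    exact ⟨hi, hj.2, by omega⟩
  have hsub : ∀ i j, i < g → j < g → ({i, j} : Finset ℕ) ⊆ Finset.range g := by
    intro i j hi hj x hx
    simp only [Finset.mem_insert, Finset.mem_singleton] at hx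
    rcases hx with h | h <;> simp [h, Finset.mem_range, hi, hj]
  have hcard : ∀ i j, i < g → j < g → i ≠ j → (Finset.range g \ {i, j}).card = g - 2 := by
    intro i j hi hj hij
    rw [Finset.card_sdiff_of_subset (hsub i j hi hj), Finset.card_range,
      Finset.card_insert_of_notMem (by simp [hij]), Finset.card_singleton]
  have hrefl : ∀ i j, i < g → j < g → i ≠ j →
      Polynomial.reflect (g - 2) (B i j) = Q i j := by
    intro i j hi hj hij
    rw [← hcard i j hi hj hij]
    exact reflect_prod_lin' _ α
  have hdegB : ∀ i j, i < g → j < g → i ≠ j → (B i j).natDegree ≤ g - 2 := by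
    intro i j hi hj hij
    rw [← hcard i j hi hj hij]
    exact natDegree_prod_lin' _ α
  -- reflected hypothesis
  have hQ : (∑ i ∈ Finset.range g, ∑ j ∈ Finset.Ico (i + 1) g, C (s i j) * Q i j) = 0 := by
    have h0 : Polynomial.reflect (g - 2)
        (∑ i ∈ Finset.range g, ∑ j ∈ Finset.Ico (i + 1) g, C (s i j) * B i j) = 0 := by
      rw [hP]; ext n; simp [coeff_reflect]
    rw [reflect_sum'] at h0
    rw [← h0]
    refine Finset.sum_congr rfl fun i hi => ?_
    rw [reflect_sum']
    refine Finset.sum_congr rfl fun j hj => ?_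
    obtain ⟨h1, h2, h3⟩ := hmem i hi j hj
    rw [Polynomial.reflect_C_mul, hrefl i j h1 h2 h3]
  have hc0 : ∀ i j, (Q i j).coeff 0 = 1 := by
    intro i j
    rw [coeff_zero_eq_eval_zero]
    simp [hQdef, eval_prod]
  -- scalar relations
  have R0 : (∑ i ∈ Finset.range g, ∑ j ∈ Finset.Ico (i + 1) g, s i j) = 0 := by
    have h := congrArg (fun p => Polynomial.coeff p 0) hQ
    simp only [finset_sum_coeff, coeff_C_mul, coeff_zero] at h
    rw [← h]
    refine Finset.sum_congr rfl fun i _ => Finset.sum_congr rfl fun j _ => ?_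
    rw [hc0, mul_one]
  have R2 : (∑ i ∈ Finset.range g, ∑ j ∈ Finset.Ico (i + 1) g, s i j * (Q i j).coeff 2) = 0 := by
    have h := congrArg (fun p => Polynomial.coeff p 2) hQ
    simpa only [finset_sum_coeff, coeff_C_mul, coeff_zero] using h
  -- full product and its coefficients
  set qfull : K[X] := ∏ m ∈ Finset.range g, (1 - C (α m) * X) with hqfull
  set E1 : K := qfull.coeff 1 with hE1def
  set E2 : K := qfull.coeff 2 with hE2def
  have hsplit : ∀ i j, i < g → j < g → i ≠ j →
      qfull = Q i j * ((1 - C (α i) * X) * (1 - C (α j) * X)) := by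
    intro i j hi hj hij
    rw [hqfull, ← Finset.prod_sdiff (hsub i j hi hj), Finset.prod_pair hij]
  have hE1 : ∀ i j, i < g → j < g → i ≠ j →
      E1 = (Q i j).coeff 1 - (α i + α j) := by
    intro i j hi hj hij
    rw [hE1def, hsplit i j hi hj hij, coeff1_mul', hc0, pair_coeff0, pair_coeff1]
    ring
  have hE2 : ∀ i j, i < g → j < g → i ≠ j →
      E2 = α i * α j - (α i + α j) * (Q i j).coeff 1 + (Q i j).coeff 2 := by
    intro i j hi hj hij
    rw [hE2def, hsplit i j hi hj hij, coeff2_mul', hc0, pair_coeff0, pair_coeff1, pair_coeff2]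
    ring
  -- coefficient of B^2
  have hBsq : ∀ i j, i < g → j < g → i ≠ j →
      ((B i j) ^ 2).coeff (2 * g - 6) =
        2 * (Q i j).coeff 2 + (Q i j).coeff 1 * (Q i j).coeff 1 := by
    intro i j hi hj hij
    have hmul : Polynomial.reflect ((g - 2) + (g - 2)) (B i j * B i j) = Q i j * Q i j := by
      rw [Polynomial.reflect_mul _ _ (hdegB i j hi hj hij) (hdegB i j hi hj hij),
        hrefl i j hi hj hij]
    have h2 : (Q i j * Q i j).coeff 2 = (B i j * B i j).coeff (2 * g - 6) := by
      rw [← hmul, coeff_reflect, revAt_le (by omega : 2 ≤ (g - 2) + (g - 2))]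
      congr 1
      omega
    rw [sq, ← h2, coeff2_mul', hc0]
    ring
  -- put everything together
  have LHSeq : (∑ i ∈ Finset.range g, ∑ j ∈ Finset.Ico (i + 1) g,
        C (s i j) * (∏ m ∈ Finset.range g \ {i, j}, (X - C (α m))) ^ 2).coeff (2 * g - 6) =
      ∑ i ∈ Finset.range g, ∑ j ∈ Finset.Ico (i + 1) g,
        s i j * (2 * (Q i j).coeff 2 + (Q i j).coeff 1 * (Q i j).coeff 1) := by
    simp only [finset_sum_coeff, coeff_C_mul]
    refine Finset.sum_congr rfl fun i hi => Finset.sum_congr rfl fun j hj => ?_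
    obtain ⟨h1, h2, h3⟩ := hmem i hi j hj
    exact congrArg (fun z => s i j * z) (hBsq i j h1 h2 h3)
  rw [LHSeq, eq_neg_iff_add_eq_zero, ← Finset.sum_add_distrib]
  have key : ∀ i ∈ Finset.range g, ∀ j ∈ Finset.Ico (i + 1) g,
      s i j * (2 * (Q i j).coeff 2 + (Q i j).coeff 1 * (Q i j).coeff 1) +
        (α i ^ 2 + α j ^ 2) * s i j =
        4 * (s i j * (Q i j).coeff 2) + (E1 ^ 2 - 2 * E2) * s i j := by
    intro i hi j hj
    obtain ⟨h1, h2, h3⟩ := hmem i hi j hj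
    have e1 := hE1 i j h1 h2 h3
    have e2 := hE2 i j h1 h2 h3
    linear_combination (-(E1 + (Q i j).coeff 1 - α i - α j) * s i j) * e1 +
      (2 * s i j) * e2
  calc (∑ i ∈ Finset.range g, ((∑ j ∈ Finset.Ico (i + 1) g,
          s i j * (2 * (Q i j).coeff 2 + (Q i j).coeff 1 * (Q i j).coeff 1)) +
          ∑ j ∈ Finset.Ico (i + 1) g, (α i ^ 2 + α j ^ 2) * s i j))
      = ∑ i ∈ Finset.range g, ∑ j ∈ Finset.Ico (i + 1) g,
          (4 * (s i j * (Q i j).coeff 2) + (E1 ^ 2 - 2 * E2) * s i j) := by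
        refine Finset.sum_congr rfl fun i hi => ?_
        rw [← Finset.sum_add_distrib]
        exact Finset.sum_congr rfl fun j hj => key i hi j hj
    _ = 4 * (∑ i ∈ Finset.range g, ∑ j ∈ Finset.Ico (i + 1) g, s i j * (Q i j).coeff 2) +
          (E1 ^ 2 - 2 * E2) * ∑ i ∈ Finset.range g, ∑ j ∈ Finset.Ico (i + 1) g, s i j := by
        simp [Finset.sum_add_distrib, Finset.mul_sum]
    _ = 0 := by rw [R0, R2]; ring
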